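/- Inherited orientation: Let s be a USO outmap on the n-hypercube and I ⊆ [n]. For each u ∈ {0,1}^n let σ(u) denote the unique sink of the face spanned by dimensions [n]∖I containing u. Then the map s' on the |I|-hypercube defined by s'(u_I) = s(σ(u))_I is well-defined and is a USO outmap. -/
import Mathlib


/-- `s` is the outmap of a unique sink orientation (Szabó–Welzl criterion). -/
def IsUSO {ι : Type*} (s : (ι → Bool) → (ι → Bool)) : Prop :=
  ∀ u v : ι → Bool, u ≠ v → ∃ i, u i ≠ v i ∧ s u i ≠ s v i

/-- Inherited orientation: if `σ u` denotes the unique sink of the face spanned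
by the dimensions outside `I` containing `u`, then the induced outmap on the
`I`-coordinates is well-defined and is a USO. -/
theorem stmt5 (n : ℕ) (s : (Fin n → Bool) → (Fin n → Bool)) (hs : IsUSO s)
    (I : Finset (Fin n)) (σ : (Fin n → Bool) → (Fin n → Bool))
    (hface : ∀ u, ∀ i ∈ I, σ u i = u i)
    (hsink : ∀ u, ∀ i ∉ I, s (σ u) i = false) :
    (∀ u v : Fin n → Bool, (∀ i ∈ I, u i = v i) → ∀ i ∈ I, s (σ u) i = s (σ v) i) ∧
    (∀ u v : Fin n → Bool, (∃ i ∈ I, u i ≠ v i) →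
      ∃ i ∈ I, u i ≠ v i ∧ s (σ u) i ≠ s (σ v) i) := by
  constructor
  · intro u v huv i hi
    have hσ : σ u = σ v := by
      by_contra hne
      obtain ⟨j, hj1, hj2⟩ := hs (σ u) (σ v) hne
      by_cases hjI : j ∈ I
      · exact hj1 (by rw [hface u j hjI, hface v j hjI, huv j hjI])
      · exact hj2 (by rw [hsink u j hjI, hsink v j hjI])
    rw [hσ]
  · intro u v ⟨i, hi, hne⟩
    have hσ : σ u ≠ σ v := fun h => hne (by
      rw [← hface u i hi, ← hface v i hi, h])
    obtain ⟨j, hj1, hj2⟩ := hs (σ u) (σ v) hσ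
    have hjI : j ∈ I := by
      by_contra hjI
      exact hj2 (by rw [hsink u j hjI, hsink v j hjI])
    exact ⟨j, hjI, by rwa [hface u j hjI, hface v j hjI] at hj1, hj2⟩
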